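/- For m ≥ 0 and n ≥ m+3, there exists a family of n−m−1 pairwise vertex-disjoint m-dimensional subcubes of Q_n and two vertices x, y avoiding them such that every x–y path in Q_n avoiding all removed subcubes has length at least n+1. Hence D_f(Q_n; Q_m) ≥ n+1. -/

import Mathlib

open SimpleGraph

/-- The `n`-dimensional hypercube: vertices are `Fin n → Bool`,
adjacent iff Hamming distance is `1`. -/
def Q (n : ℕ) : SimpleGraph (Fin n → Bool) where
  Adj u v := hammingDist u v = 1
  symm := ⟨fun u v (h : hammingDist u v = 1) => by
    show hammingDist v u = 1; rw [hammingDist_comm]; exact h⟩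
  loopless := ⟨fun u (h : hammingDist u u = 1) => by simp [hammingDist_self] at h⟩

/-- Flip the `i`-th bit of `x`. -/
def flipBit {n : ℕ} (x : Fin n → Bool) (i : Fin n) : Fin n → Bool :=
  Function.update x i (!x i)

/-- `S` is a subcube of dimension exactly `m` (fixing `n - m` coordinates). -/
def IsSubcube {n : ℕ} (m : ℕ) (S : Set (Fin n → Bool)) : Prop :=
  ∃ A : Finset (Fin n), A.card = n - m ∧ ∃ p : Fin n → Bool,
    S = {x | ∀ i ∈ A, x i = p i}

/-- `S` is a subcube of dimension at most `m` (fixing at least `n - m` coordinates). -/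
def IsSubcubeLe {n : ℕ} (m : ℕ) (S : Set (Fin n → Bool)) : Prop :=
  ∃ A : Finset (Fin n), n - m ≤ A.card ∧ ∃ p : Fin n → Bool,
    S = {x | ∀ i ∈ A, x i = p i}

lemma exists_flip {n : ℕ} {u u' : Fin n → Bool} (h : hammingDist u u' = 1) :
    ∃ j : Fin n, u' = Function.update u j (!u j) := by
  rw [hammingDist] at h
  obtain ⟨j, hj⟩ := Finset.card_eq_one.1 h
  refine ⟨j, funext fun i => ?_⟩
  rcases eq_or_ne i j with rfl | hij
  · have : i ∈ ({i} : Finset (Fin n)) := Finset.mem_singleton_self i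
    rw [← hj, Finset.mem_filter] at this
    simp only [Function.update_self]
    revert this; cases u i <;> cases u' i <;> simp
  · have : i ∉ ({j} : Finset (Fin n)) := by simp [hij]
    rw [← hj, Finset.mem_filter] at this
    simp only [Function.update_of_ne hij]
    push_neg at this
    exact (this (Finset.mem_univ i)).symm

lemma hamming_flip {n : ℕ} (u v : Fin n → Bool) (j : Fin n) :
    (u j = v j ∧ hammingDist (Function.update u j (!u j)) v = hammingDist u v + 1) ∨
    (u j ≠ v j ∧ hammingDist (Function.update u j (!u j)) v + 1 = hammingDist u v) := by
  rcases eq_or_ne (u j) (v j) with hj | hj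
  · left
    refine ⟨hj, ?_⟩
    rw [hammingDist, hammingDist]
    have : (Finset.univ.filter fun i => Function.update u j (!u j) i ≠ v i)
        = insert j (Finset.univ.filter fun i => u i ≠ v i) := by
      ext i
      rcases eq_or_ne i j with rfl | hij
      · simp [hj]
      · simp [Function.update_of_ne hij, hij]
    rw [this, Finset.card_insert_of_notMem (by simp [hj])]
  · right
    refine ⟨hj, ?_⟩
    rw [hammingDist, hammingDist]
    have : (Finset.univ.filter fun i => u i ≠ v i)
        = insert j (Finset.univ.filter fun i => Function.update u j (!u j) i ≠ v i) := by
      ext i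
      rcases eq_or_ne i j with rfl | hij
      · simp [hj]
      · simp [Function.update_of_ne hij, hij]
    rw [this, Finset.card_insert_of_notMem (by simpa using hj)]

lemma walk_length_lower {n : ℕ} : ∀ {u v : Fin n → Bool} (p : (Q n).Walk u v),
    hammingDist u v ≤ p.length ∧ (p.length + hammingDist u v) % 2 = 0 := by
  intro u v p
  induction p with
  | nil => simp [hammingDist_self]
  | @cons u u' v h q ih =>
    obtain ⟨j, rfl⟩ := exists_flip h
    obtain ⟨ih1, ih2⟩ := ih
    rcases hamming_flip u v j with ⟨_, he⟩ | ⟨_, he⟩ <;>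
      simp only [SimpleGraph.Walk.length_cons] <;> constructor <;> omega

lemma geodesic_const {n : ℕ} : ∀ {u v : Fin n → Bool} (p : (Q n).Walk u v),
    p.length = hammingDist u v →
    ∀ w ∈ p.support, ∀ i, u i = v i → w i = u i := by
  intro u v p
  induction p with
  | nil => intro _ w hw i _; simp at hw; rw [hw]
  | @cons u u' v h q ih =>
    intro hlen w hw i hi
    obtain ⟨j, rfl⟩ := exists_flip h
    simp only [SimpleGraph.Walk.length_cons] at hlen
    have hlow := (walk_length_lower q).1
    rcases hamming_flip u v j with ⟨hj, he⟩ | ⟨hj, he⟩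
    · omega
    · simp only [SimpleGraph.Walk.support_cons, List.mem_cons] at hw
      rcases hw with rfl | hw
      · rfl
      · have hij : i ≠ j := fun hij => hj (hij ▸ hi)
        have h1 : Function.update u j (!u j) i = v i := by
          rw [Function.update_of_ne hij]; exact hi
        have := ih (by omega) w hw i h1
        rw [this, Function.update_of_ne hij]

lemma walk_ivt {n : ℕ} (g : (Fin n → Bool) → ℕ)
    (hstep : ∀ a b : Fin n → Bool, (Q n).Adj a b → g b ≤ g a + 1) :
    ∀ {u v : Fin n → Bool} (p : (Q n).Walk u v) (c : ℕ),
      g u ≤ c → c ≤ g v → ∃ w ∈ p.support, g w = c := by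
  intro u v p
  induction p with
  | @nil a => intro c h1 h2; exact ⟨a, by simp, le_antisymm h1 h2⟩
  | @cons u u' v h q ih =>
    intro c h1 h2
    rcases eq_or_lt_of_le h1 with rfl | hlt
    · exact ⟨u, by simp, rfl⟩
    · obtain ⟨w, hw, hgw⟩ := ih c (le_trans (hstep u u' h) hlt) h2
      exact ⟨w, by simp [hw], hgw⟩

theorem subcube_structure_lower_bound (n m : ℕ) (h : m + 3 ≤ n) :
    ∃ F : Finset (Set (Fin n → Bool)), F.card = n - m - 1 ∧
      (∀ S ∈ F, IsSubcube m S) ∧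
      (∀ S ∈ F, ∀ T ∈ F, S ≠ T → Disjoint S T) ∧
      ∃ x y : Fin n → Bool,
        x ∉ ⋃₀ (↑F : Set (Set (Fin n → Bool))) ∧
        y ∉ ⋃₀ (↑F : Set (Set (Fin n → Bool))) ∧
        ∀ p : (Q n).Walk x y, p.IsPath →
          (∀ w ∈ p.support, w ∉ ⋃₀ (↑F : Set (Set (Fin n → Bool)))) →
          n + 1 ≤ p.length := by
  classical
  have hn : 0 < n := by omega
  set last : Fin n := ⟨n - 1, by omega⟩ with hlast
  set M : Finset (Fin n) := Finset.univ.filter (fun i => m ≤ i.val ∧ i.val < n - 1) with hM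
  have hlastM : last ∉ M := by simp [hM, hlast]
  have hMcard : M.card = n - m - 1 := by
    have himg : M.image Fin.val = Finset.Ico m (n - 1) := by
      ext a
      simp only [Finset.mem_image, hM, Finset.mem_filter, Finset.mem_univ, true_and,
        Finset.mem_Ico]
      constructor
      · rintro ⟨i, ⟨h1, h2⟩, rfl⟩; exact ⟨h1, h2⟩
      · rintro ⟨h1, h2⟩; exact ⟨⟨a, by omega⟩, ⟨h1, h2⟩, rfl⟩
    have := Finset.card_image_of_injective M (Fin.val_injective)
    rw [himg] at this
    rw [← this, Nat.card_Ico]; omega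
  set S : Fin n → Set (Fin n → Bool) :=
    fun j => {z | ∀ i ∈ insert last M, z i = decide (i = j)} with hS
  set F : Finset (Set (Fin n → Bool)) := M.image S with hF
  have hSelf : ∀ j, (fun i => decide (i = j)) ∈ S j := fun j i _ => rfl
  have hSinj : Set.InjOn S M := by
    intro j hj j' hj' hjj'
    have := hjj' ▸ hSelf j
    have h2 := this j' (Finset.mem_insert_of_mem hj')
    exact (by simpa using h2.symm : j' = j).symm
  have hFcard : F.card = n - m - 1 := by
    rw [hF, Finset.card_image_of_injOn hSinj, hMcard]
  have hjlast : ∀ j ∈ M, j ≠ last := by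
    intro j hj heq
    rw [heq] at hj
    exact hlastM hj
  refine ⟨F, hFcard, ?_, ?_, ?_⟩
  · -- IsSubcube
    intro T hT
    rw [hF, Finset.mem_image] at hT
    obtain ⟨j, hj, rfl⟩ := hT
    refine ⟨insert last M, ?_, fun i => decide (i = j), rfl⟩
    rw [Finset.card_insert_of_notMem hlastM, hMcard]; omega
  · -- disjoint
    intro T hT T' hT' hne
    rw [hF, Finset.mem_image] at hT hT'
    obtain ⟨j, hj, rfl⟩ := hT
    obtain ⟨j', hj', rfl⟩ := hT'
    have hjj' : j ≠ j' := fun e => hne (e ▸ rfl)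
    rw [Set.disjoint_left]
    intro z hz hz'
    have h1 := hz j (Finset.mem_insert_of_mem hj)
    have h2 := hz' j (Finset.mem_insert_of_mem hj)
    rw [h1] at h2
    simp [hjj'] at h2
  · -- main
    set x : Fin n → Bool := fun _ => false with hx
    set y : Fin n → Bool := fun i => decide (i.val < n - 1) with hy
    have hmemS : ∀ z T, T ∈ F → z ∈ T → ∃ j ∈ M, T = S j ∧
        z last = false ∧ ∀ i ∈ M, z i = decide (i = j) := by
      intro z T hT hzT
      rw [hF, Finset.mem_image] at hT
      obtain ⟨j, hj, rfl⟩ := hT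
      refine ⟨j, hj, rfl, ?_, fun i hi => hzT i (Finset.mem_insert_of_mem hi)⟩
      have := hzT last (Finset.mem_insert_self _ _)
      rw [this]
      simp [Ne.symm (hjlast j hj)]
    have hxF : x ∉ ⋃₀ (↑F : Set (Set (Fin n → Bool))) := by
      rintro ⟨T, hT, hxT⟩
      obtain ⟨j, hj, -, -, h4⟩ := hmemS x T (by exact_mod_cast hT) hxT
      have := h4 j hj
      simp [hx] at this
    have hyF : y ∉ ⋃₀ (↑F : Set (Set (Fin n → Bool))) := by
      rintro ⟨T, hT, hyT⟩
      obtain ⟨j, hj, -, -, h4⟩ := hmemS y T (by exact_mod_cast hT) hyT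
      obtain ⟨j', hj', hne⟩ := Finset.exists_mem_ne (by omega : 1 < M.card) j
      have h5 := h4 j' hj'
      have h6 : y j' = true := by
        rw [hM, Finset.mem_filter] at hj'
        simp [hy]; omega
      rw [h6] at h5
      simp [hne] at h5
    refine ⟨x, y, hxF, hyF, ?_⟩
    intro p hpath havoid
    by_contra hcon
    push_neg at hcon
    have hxy : hammingDist x y = n - 1 := by
      rw [hammingDist]
      have he : (Finset.univ.filter fun i => x i ≠ y i) = Finset.univ.erase last := by
        ext i
        simp only [Finset.mem_filter, Finset.mem_univ, true_and, Finset.mem_erase, and_true,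
          hx, hy]
        constructor
        · intro hi he2
          rw [he2, hlast] at hi
          simp at hi
        · intro hi
          have hv : i.val < n - 1 := by
            have hlt := i.isLt
            rcases lt_or_ge i.val (n-1) with h' | h'
            · exact h'
            · exfalso; apply hi; apply Fin.ext
              show i.val = n - 1
              omega
          simp [hv]
      rw [he, Finset.card_erase_of_mem (Finset.mem_univ _), Finset.card_univ, Fintype.card_fin]
    obtain ⟨hlow, hpar⟩ := walk_length_lower p
    rw [hxy] at hlow hpar
    have hlen : p.length = n - 1 := by omega
    -- last coordinate constant false on support
    have hconst := geodesic_const p (by omega)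
    have hlastconst : ∀ w ∈ p.support, w last = false := by
      intro w hw
      have hxylast : x last = y last := by simp [hx, hy, hlast]
      have := hconst w hw last hxylast
      rw [this]
    -- IVT
    set g : (Fin n → Bool) → ℕ := fun w => (M.filter fun i => w i = true).card with hg
    have hstep : ∀ a b : Fin n → Bool, (Q n).Adj a b → g b ≤ g a + 1 := by
      intro a b hab
      obtain ⟨j, rfl⟩ := exists_flip hab
      have hsub : (M.filter fun i => Function.update a j (!a j) i = true) ⊆
          insert j (M.filter fun i => a i = true) := by
        intro i hi
        rw [Finset.mem_filter] at hi
        rcases eq_or_ne i j with rfl | hij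
        · exact Finset.mem_insert_self _ _
        · rw [Function.update_of_ne hij] at hi
          exact Finset.mem_insert_of_mem (Finset.mem_filter.2 hi)
      calc g (Function.update a j (!a j)) ≤ (insert j (M.filter fun i => a i = true)).card :=
            Finset.card_le_card hsub
        _ ≤ g a + 1 := Finset.card_insert_le _ _
    have hgx : g x = 0 := by
      rw [hg]; simp [hx]
    have hgy : 1 ≤ g y := by
      have : (M.filter fun i => y i = true) = M := by
        apply Finset.filter_eq_self.2
        intro i hi
        rw [hM, Finset.mem_filter] at hi
        simp [hy]; omega
      rw [hg]; simp only; rw [this]; omega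
    obtain ⟨w, hw, hgw⟩ := walk_ivt g hstep p 1 (by omega) hgy
    -- w is in some S j
    obtain ⟨j, hjfil⟩ := Finset.card_eq_one.1 hgw
    have hjM : j ∈ M := by
      have : j ∈ M.filter fun i => w i = true := hjfil ▸ Finset.mem_singleton_self j
      exact (Finset.mem_filter.1 this).1
    have hwS : w ∈ S j := by
      intro i hi
      rcases Finset.mem_insert.1 hi with rfl | hiM
      · rw [hlastconst w hw]
        simp [Ne.symm (hjlast j hjM)]
      · rcases eq_or_ne i j with rfl | hij
        · have : i ∈ M.filter fun i' => w i' = true := hjfil ▸ Finset.mem_singleton_self i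
          rw [(Finset.mem_filter.1 this).2]
          simp
        · have : i ∉ M.filter fun i' => w i' = true := by
            rw [hjfil]; simpa using hij
          rw [Finset.mem_filter] at this
          push_neg at this
          have hfalse := this hiM
          simp only [Bool.not_eq_true] at hfalse
          rw [hfalse]
          simp [hij]
    exact havoid w hw ⟨S j, by exact_mod_cast Finset.mem_image_of_mem S hjM, hwS⟩
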